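/- Let D be a triangulated category, and suppose given a 'Postnikov diagram': a complex A_m → A_{m-1} → ⋯ → A_1 → A_0 with composites ∂_i = α_{i-1}∘d_i, together with distinguished triangles C_i → A_i → C_{i-1} → C_i[1] for i = 1,…,m, with C_0 = A_0. If Hom(A_j, A_i[-k]) = 0 for all i = 0,…,m−2, all j ≥ i+2, and all k ≥ 1, then the maps d_i: A_i → C_{i-1} are uniquely determined by the ∂_i: if d'_i: A_i → C_{i-1} also satisfy ∂_i = α_{i-1}∘d'_i for all i, then d'_i = d_i for all i. -/

import Mathlib

open CategoryTheory CategoryTheory.Limits CategoryTheory.Pretriangulated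

lemma stmt4_aux {D : Type*} [Category D] [Preadditive D] [HasZeroObject D]
    [HasShift D ℤ] [∀ n : ℤ, (shiftFunctor D n).Additive] [Pretriangulated D]
    (A C : ℕ → D)
    (α : ∀ i, C i ⟶ A i)
    (d : ∀ i, A (i + 1) ⟶ C i)
    (h : ∀ i, C i ⟶ (C (i + 1))⟦(1 : ℤ)⟧)
    (hzero : IsIso (α 0))
    (hvanish : ∀ i j : ℕ, j ≥ i + 2 → ∀ k : ℕ, 1 ≤ k →
      ∀ f : A j ⟶ (A i)⟦(-(k : ℤ))⟧, f = 0) :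
    ∀ n : ℕ, (∀ i < n, Triangle.mk (α (i + 1)) (d i) (h i) ∈ distTriang D) →
      ∀ j ≥ n + 2, ∀ k : ℕ, 1 ≤ k → ∀ f : A j ⟶ (C n)⟦(-(k : ℤ))⟧, f = 0 := by
  intro n
  induction n with
  | zero =>
    intro _ j hj k hk f
    have : IsIso ((shiftFunctor D (-(k : ℤ))).map (α 0)) := inferInstance
    have h0 : f ≫ (shiftFunctor D (-(k : ℤ))).map (α 0) = 0 :=
      hvanish 0 j hj k hk _
    rw [← cancel_mono ((shiftFunctor D (-(k : ℤ))).map (α 0)), h0, zero_comp]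
  | succ n ih =>
    intro hdist j hj k hk f
    -- shifted triangle
    have hT := Pretriangulated.Triangle.shift_distinguished _
      (hdist n (Nat.lt_succ_self n)) (-(k : ℤ))
    set T := (CategoryTheory.shiftFunctor (Triangle D) (-(k : ℤ))).obj
      (Triangle.mk (α (n + 1)) (d n) (h n)) with hTdef
    have hf : f ≫ T.mor₁ = 0 := by
      have : f ≫ (shiftFunctor D (-(k : ℤ))).map (α (n + 1)) = 0 :=
        hvanish (n + 1) j hj k hk _
      dsimp [T, Triangle.shiftFunctor]
      show f ≫ ((-(k : ℤ)).negOnePow • (shiftFunctor D (-(k : ℤ))).map (α (n + 1))) = 0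
      rw [Linear.comp_units_smul, this, smul_zero]
    obtain ⟨g, hg⟩ := Triangle.coyoneda_exact₂ _
      (inv_rot_of_distTriang _ hT) f hf
    have hg0 : g = 0 := by
      have e := (shiftFunctorAdd' D (-(k : ℤ)) (-1 : ℤ) (-((k + 1 : ℕ) : ℤ))
        (by push_cast; ring)).symm
      have h1 : g ≫ (e.hom.app (C n)) = 0 :=
        ih (fun i hi => hdist i (Nat.lt_succ_of_lt hi)) j
          (by omega) (k + 1) (by omega) _
      have : IsIso (e.hom.app (C n)) := inferInstance
      exact (cancel_mono (e.hom.app (C n))).1 (h1.trans zero_comp.symm)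
    rw [hg, hg0, zero_comp]; rfl

theorem stmt4 {D : Type*} [Category D] [Preadditive D] [HasZeroObject D]
    [HasShift D ℤ] [∀ n : ℤ, (shiftFunctor D n).Additive] [Pretriangulated D]
    (m : ℕ) (A C : ℕ → D)
    (α : ∀ i, C i ⟶ A i)
    (d : ∀ i, A (i + 1) ⟶ C i)
    (h : ∀ i, C i ⟶ (C (i + 1))⟦(1 : ℤ)⟧)
    (hzero : IsIso (α 0))
    (hdist : ∀ i < m, Triangle.mk (α (i + 1)) (d i) (h i) ∈ distTriang D)
    (hvanish : ∀ i j : ℕ, j ≥ i + 2 → ∀ k : ℕ, 1 ≤ k →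
      ∀ f : A j ⟶ (A i)⟦(-(k : ℤ))⟧, f = 0)
    (d' : ∀ i, A (i + 1) ⟶ C i)
    (hd' : ∀ i < m, d' i ≫ α i = d i ≫ α i) :
    ∀ i < m, d' i = d i := by
  intro i hi
  have hδ : (d' i - d i) ≫ α i = 0 := by
    rw [Preadditive.sub_comp, hd' i hi, sub_self]
  have : d' i - d i = 0 := by
    match i with
    | 0 =>
      rw [← cancel_mono (α 0)]; rw [hδ, zero_comp]
    | (n + 1) =>
      have hTn := hdist n (by omega)
      have hf : (d' (n + 1) - d (n + 1)) ≫ (Triangle.mk (α (n + 1)) (d n) (h n)).mor₁ = 0 := hδ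
      obtain ⟨g, hg⟩ := Triangle.coyoneda_exact₂ _
        (inv_rot_of_distTriang _ hTn) _ hf
      have hg0 : g = 0 :=
        stmt4_aux A C α d h hzero hvanish n (fun i hi' => hdist i (by omega))
          (n + 2) le_rfl 1 le_rfl g
      rw [hg, hg0, zero_comp]; rfl
  rw [← sub_eq_zero]; exact this
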